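/- The sequence (q_n)_{n≥1} is strictly increasing and converges to the Komornik–Loreti constant q_KL as n → ∞. -/

import Mathlib

open Filter Topology

noncomputable section

/-- The value `Σ_{i≥0} d i / q^(i+1)` of a (0-indexed) digit sequence `d` in base `q`;
this corresponds to `((d_i)_{i≥1})_q` with `d_i = d (i-1)`. -/
def seqVal (q : ℝ) (d : ℕ → ℕ) : ℝ := ∑' i : ℕ, (d i : ℝ) / q ^ (i + 1)

/-- `d` is a `q`-expansion of `x` with digits in `{0,1}`. -/
def IsExpansion (q x : ℝ) (d : ℕ → ℕ) : Prop :=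
  (∀ i, d i ≤ 1) ∧ x = seqVal q d

/-- `x` has a unique `q`-expansion. -/
def HasUniqueExpansion (q x : ℝ) : Prop := ∃! d : ℕ → ℕ, IsExpansion q x d

/-- The set `U(x)` of univoque bases of `x`. -/
def UBases (x : ℝ) : Set ℝ := {q | 1 < q ∧ q < 2 ∧ HasUniqueExpansion q x}

/-- `q_s(x) = inf U(x)`. -/
def qs (x : ℝ) : ℝ := sInf (UBases x)

/-- The univoque set `U_q` of `x ∈ [0, 1/(q-1)]` with a unique `q`-expansion. -/
def Uset (q : ℝ) : Set ℝ :=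
  {x | x ∈ Set.Icc 0 (1 / (q - 1)) ∧ HasUniqueExpansion q x}

/-- The set `U_q'` of digit sequences which are the unique `q`-expansion of their value. -/
def USeq (q : ℝ) : Set (ℕ → ℕ) :=
  {d | (∀ i, d i ≤ 1) ∧ ∀ e : ℕ → ℕ, IsExpansion q (seqVal q d) e → e = d}

/-- The Thue–Morse sequence: `τ 0 = 0`, `τ (2n) = τ n`, `τ (2n+1) = 1 - τ n`. -/
def IsThueMorse (τ : ℕ → ℕ) : Prop :=
  τ 0 = 0 ∧ (∀ n, τ (2 * n) = τ n) ∧ ∀ n, τ (2 * n + 1) = 1 - τ n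

/-- `q` is the Komornik–Loreti constant: the base in `(1,2)` with `1 = Σ_{i≥1} τ_i q^{-i}`. -/
def IsKL (τ : ℕ → ℕ) (q : ℝ) : Prop :=
  1 < q ∧ q < 2 ∧ (1 : ℝ) = ∑' i : ℕ, (τ (i + 1) : ℝ) / q ^ (i + 1)

/-- `Q` is the sequence of bases `q_n`: `Q 0 = 1` and for `n ≥ 1`, `Q n` is the root in
`(1,2)` of `1 = Σ_{i=1}^{2^n} τ_i q^{-i}`. -/
def IsBaseSeq (τ : ℕ → ℕ) (Q : ℕ → ℝ) : Prop :=
  Q 0 = 1 ∧ ∀ n, 1 ≤ n → 1 < Q n ∧ Q n < 2 ∧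
    (1 : ℝ) = ∑ i ∈ Finset.range (2 ^ n), (τ (i + 1) : ℝ) / (Q n) ^ (i + 1)

/-- `D_n = ⋃_{q ∈ (q_{n-1}, q_n]} U_q`. -/
def D (Q : ℕ → ℝ) (n : ℕ) : Set ℝ := ⋃ q ∈ Set.Ioc (Q (n - 1)) (Q n), Uset q

/-- The golden ratio. -/
def qG : ℝ := (1 + Real.sqrt 5) / 2

/-- Strict lexicographical order on digit sequences. -/
def seqLt (c d : ℕ → ℕ) : Prop := ∃ n, (∀ i, i < n → c i = d i) ∧ c n < d n

/-- The word `τ_1 ⋯ τ_m`. -/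
def tmPrefix (τ : ℕ → ℕ) (m : ℕ) : List ℕ := (List.range m).map fun i => τ (i + 1)

/-- `w⁻`: decrease the last digit of a word by 1. -/
def lastDec (w : List ℕ) : List ℕ := w.dropLast ++ [w.getLastD 0 - 1]

/-- `w⁺`: increase the last digit of a word by 1. -/
def lastInc (w : List ℕ) : List ℕ := w.dropLast ++ [w.getLastD 0 + 1]

/-- The reflection of a word. -/
def reflect (w : List ℕ) : List ℕ := w.map fun d => 1 - d

/-- The infinite sequence given by the prefix `p` followed by periodic repetition of `w`. -/
def prefPeriodic (p w : List ℕ) : ℕ → ℕ := fun j =>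
  if j < p.length then p.getD j 0 else w.getD ((j - p.length) % w.length) 0

/-- `z_n = ((τ_1⋯τ_{2^{n-1}})(τ_{2^{n-1}+1}⋯τ_{2^n})^∞)_{q_n}`. -/
def zVal (τ : ℕ → ℕ) (Q : ℕ → ℝ) (n : ℕ) : ℝ :=
  seqVal (Q n) (prefPeriodic (tmPrefix τ (2 ^ (n - 1)))
    ((List.range (2 ^ (n - 1))).map fun i => τ (2 ^ (n - 1) + (i + 1))))

/-- `z_{1,k} = Σ_{i=1}^k q_G^{-i} + 1/(q_G^k (q_G^2 - 1))`. -/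
def z1 (k : ℕ) : ℝ :=
  (∑ i ∈ Finset.range k, 1 / qG ^ (i + 1)) + 1 / (qG ^ k * (qG ^ 2 - 1))


lemma tmLe {τ : ℕ → ℕ} (hτ : IsThueMorse τ) : ∀ n, τ n ≤ 1 := by
  intro n
  induction n using Nat.strong_induction_on with
  | _ n ih =>
    rcases Nat.even_or_odd n with ⟨m, hm⟩ | ⟨m, hm⟩
    · rcases Nat.eq_zero_or_pos m with rfl | hm0
      · have : n = 0 := by omega
        simp [this, hτ.1]
      · have h : τ n = τ m := by rw [show n = 2 * m by omega, hτ.2.1]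
        rw [h]; exact ih m (by omega)
    · have h : τ n = 1 - τ m := by rw [show n = 2 * m + 1 by omega, hτ.2.2]
      rw [h]; exact Nat.sub_le 1 (τ m)

lemma tmOne {τ : ℕ → ℕ} (hτ : IsThueMorse τ) : τ 1 = 1 := by
  have := hτ.2.2 0
  simpa [hτ.1] using this

lemma tmPow {τ : ℕ → ℕ} (hτ : IsThueMorse τ) : ∀ k, τ (2 ^ k) = 1 := by
  intro k
  induction k with
  | zero => simpa using tmOne hτ
  | succ k ih => rw [pow_succ, mul_comm, hτ.2.1]; exact ih

lemma sumAnti (τ : ℕ → ℕ) {q q' : ℝ} (h1 : 1 < q) (h2 : q ≤ q') (n : ℕ) :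
    ∑ i ∈ Finset.range n, (τ (i + 1) : ℝ) / q' ^ (i + 1) ≤
      ∑ i ∈ Finset.range n, (τ (i + 1) : ℝ) / q ^ (i + 1) := by
  apply Finset.sum_le_sum
  intro i _
  have hq : (0:ℝ) < q := by linarith
  exact div_le_div_of_nonneg_left (by positivity) (by positivity)
    (pow_le_pow_left₀ (by linarith) h2 _)

lemma summableTM {τ : ℕ → ℕ} (hτ : IsThueMorse τ) {q : ℝ} (h1 : 1 < q) :
    Summable (fun i => (τ (i + 1) : ℝ) / q ^ (i + 1)) := by
  have hq : (0:ℝ) < q := by linarith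
  have hr : (0:ℝ) ≤ 1 / q := by positivity
  have hr2 : 1 / q < 1 := by rw [div_lt_one hq]; exact h1
  have hg : Summable (fun i : ℕ => (1/q) ^ (i + 1)) := by
    exact ((summable_geometric_of_lt_one hr hr2).mul_left (1/q)).congr
      (fun i => by rw [pow_succ, mul_comm])
  refine hg.of_nonneg_of_le (fun i => by positivity) (fun i => ?_)
  rw [div_pow, one_pow]
  refine div_le_div_of_nonneg_right ?_ (by positivity)
  exact_mod_cast tmLe hτ (i + 1)

/-- `(q_n)_{n≥1}` is strictly increasing and converges to `q_KL`. -/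
theorem baseSeq_strictMono_tendsto (τ : ℕ → ℕ) (hτ : IsThueMorse τ)
    (qKL : ℝ) (hKL : IsKL τ qKL) (Q : ℕ → ℝ) (hQ : IsBaseSeq τ Q) :
    StrictMono (fun n => Q (n + 1)) ∧
      Tendsto (fun n => Q (n + 1)) atTop (nhds qKL) := by
  obtain ⟨hQ0, hQn⟩ := hQ
  obtain ⟨hK1, hK2, hKsum⟩ := hKL
  have hstep : ∀ n, 1 ≤ n → Q n < Q (n + 1) := by
    intro n hn
    obtain ⟨ha1, ha2, hasum⟩ := hQn n hn
    obtain ⟨hb1, hb2, hbsum⟩ := hQn (n+1) (by omega)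
    by_contra h
    push_neg at h
    have hmono := sumAnti τ hb1 h (2 ^ (n+1))
    have hlt : ∑ i ∈ Finset.range (2 ^ n), (τ (i+1):ℝ) / (Q n) ^ (i+1)
        < ∑ i ∈ Finset.range (2 ^ (n+1)), (τ (i+1):ℝ) / (Q n) ^ (i+1) := by
      have hNpos : 0 < 2 ^ (n+1) := Nat.pow_pos (by norm_num)
      have hle : (2:ℕ) ^ n ≤ 2 ^ (n+1) - 1 := by
        have : (2:ℕ) ^ (n+1) = 2 ^ n + 2 ^ n := by rw [pow_succ]; ring
        have h2 : 0 < 2 ^ n := Nat.pow_pos (by norm_num)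
        omega
      apply Finset.sum_lt_sum_of_subset
        (Finset.range_subset_range.2 (Nat.pow_le_pow_right (by norm_num) (by omega)))
        (i := 2 ^ (n+1) - 1)
      · rw [Finset.mem_range]; omega
      · rw [Finset.mem_range]; omega
      · have he : (2 ^ (n+1) - 1) + 1 = 2 ^ (n+1) := by omega
        rw [he, tmPow hτ]
        have : (0:ℝ) < Q n := by linarith
        positivity
      · intro j _ _
        have : (0:ℝ) < Q n := by linarith
        positivity
    rw [← hasum] at hlt
    rw [← hbsum] at hmono
    linarith
  have hSM : StrictMono (fun n => Q (n + 1)) :=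
    strictMono_nat_of_lt_succ (fun n => hstep (n+1) (by omega))
  refine ⟨hSM, ?_⟩
  have hQ1 : 1 < Q 1 := (hQn 1 le_rfl).1
  set r : ℝ := 1 / Q 1 with hrdef
  have hr0 : 0 < r := by positivity
  have hr1 : r < 1 := by rw [hrdef, div_lt_one (by linarith)]; exact hQ1
  have key : ∀ n : ℕ, qKL⁻¹ ≤ (Q (n+1))⁻¹ ∧ (Q (n+1))⁻¹ ≤ qKL⁻¹ + r ^ n * (1 - r)⁻¹ := by
    intro n
    obtain ⟨h1, h2, hsum⟩ := hQn (n+1) (by omega)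
    set q := Q (n+1) with hqdef
    have hq0 : (0:ℝ) < q := by linarith
    have hk0 : (0:ℝ) < qKL := by linarith
    have hsq : Summable (fun i => (τ (i+1):ℝ)/q^(i+1)) := summableTM hτ h1
    have hsk : Summable (fun i => (τ (i+1):ℝ)/qKL^(i+1)) := summableTM hτ hK1
    set N := 2 ^ (n+1) with hNdef
    have hsplit : (∑' i : ℕ, (τ (i+1):ℝ)/q^(i+1))
        = 1 + ∑' i : ℕ, (τ (i+N+1):ℝ)/q^(i+N+1) := by
      rw [← Summable.sum_add_tsum_nat_add N hsq, ← hsum]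
    have hshift : Summable (fun i : ℕ => (τ (i+N+1):ℝ)/q^(i+N+1)) := by
      have := (summable_nat_add_iff N).2 hsq
      exact this.congr (fun i => by ring_nf)
    have htail_pos : 0 < ∑' i : ℕ, (τ (i+N+1):ℝ)/q^(i+N+1) := by
      have hmem := hshift.le_tsum (N-1) (fun j _ => by positivity)
      have hNpos : 0 < N := Nat.pow_pos (by norm_num)
      have he : (N - 1) + N + 1 = 2 ^ (n+2) := by
        rw [hNdef]; rw [pow_succ 2 (n+1)]; omega
      refine lt_of_lt_of_le ?_ hmem
      rw [he, tmPow hτ]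
      positivity
    have hqk : q ≤ qKL := by
      by_contra hc
      push_neg at hc
      have hle : (∑' i : ℕ, (τ (i+1):ℝ)/q^(i+1)) ≤ ∑' i : ℕ, (τ (i+1):ℝ)/qKL^(i+1) := by
        apply Summable.tsum_le_tsum _ hsq hsk
        intro i
        exact div_le_div_of_nonneg_left (by positivity) (by positivity)
          (pow_le_pow_left₀ (by linarith) hc.le _)
      rw [hsplit, ← hKsum] at hle
      linarith
    have hinv : qKL⁻¹ ≤ q⁻¹ := inv_anti₀ hq0 hqk
    refine ⟨hinv, ?_⟩
    have hdiffsum : Summable (fun i : ℕ => (τ (i+1):ℝ)/q^(i+1) - (τ (i+1):ℝ)/qKL^(i+1)) :=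
      hsq.sub hsk
    have hdiff : q⁻¹ - qKL⁻¹ ≤ ∑' i : ℕ, ((τ (i+1):ℝ)/q^(i+1) - (τ (i+1):ℝ)/qKL^(i+1)) := by
      have h0 : (τ (0+1):ℝ)/q^(0+1) - (τ (0+1):ℝ)/qKL^(0+1) = q⁻¹ - qKL⁻¹ := by
        rw [tmOne hτ]
        simp [one_div]
      rw [← h0]
      apply hdiffsum.le_tsum 0
      intro j _
      have : (τ (j+1):ℝ)/qKL^(j+1) ≤ (τ (j+1):ℝ)/q^(j+1) :=
        div_le_div_of_nonneg_left (by positivity) (by positivity)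
          (pow_le_pow_left₀ (by linarith) hqk _)
      linarith
    have hdiffeq : (∑' i : ℕ, ((τ (i+1):ℝ)/q^(i+1) - (τ (i+1):ℝ)/qKL^(i+1)))
        = ∑' i : ℕ, (τ (i+N+1):ℝ)/q^(i+N+1) := by
      rw [hsq.tsum_sub hsk, hsplit, ← hKsum]
      ring
    have hq1q : Q 1 ≤ q := by
      have := hSM.monotone (Nat.zero_le n)
      simpa using this
    have htail_le : (∑' i : ℕ, (τ (i+N+1):ℝ)/q^(i+N+1)) ≤ r ^ n * (1 - r)⁻¹ := by
      have hrgeo : Summable (fun i : ℕ => r ^ (i + N + 1)) := by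
        refine ((summable_geometric_of_lt_one hr0.le hr1).mul_left (r ^ (N+1))).congr
          (fun i => ?_)
        rw [← pow_add]
        ring_nf
      have hterm : ∀ i : ℕ, (τ (i+N+1):ℝ)/q^(i+N+1) ≤ r ^ (i + N + 1) := by
        intro i
        have h1' : (τ (i+N+1):ℝ)/q^(i+N+1) ≤ 1/q^(i+N+1) := by
          refine div_le_div_of_nonneg_right ?_ (by positivity)
          exact_mod_cast tmLe hτ (i+N+1)
        have h2' : (1:ℝ)/q^(i+N+1) ≤ r ^ (i+N+1) := by
          rw [hrdef, div_pow, one_pow]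
          refine div_le_div_of_nonneg_left (by norm_num) (by positivity)
            (pow_le_pow_left₀ (by linarith) hq1q _)
        linarith
      have hA : (∑' i : ℕ, (τ (i+N+1):ℝ)/q^(i+N+1)) ≤ ∑' i : ℕ, r ^ (i + N + 1) :=
        Summable.tsum_le_tsum hterm hshift hrgeo
      have hB : (∑' i : ℕ, r ^ (i + N + 1)) = r ^ (N+1) * (1 - r)⁻¹ := by
        have : (∑' i : ℕ, r ^ (i + N + 1)) = ∑' i : ℕ, r ^ (N+1) * r ^ i := by
          congr 1
          funext i
          rw [← pow_add]
          ring_nf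
        rw [this, tsum_mul_left, tsum_geometric_of_lt_one hr0.le hr1]
      have hC : r ^ (N+1) ≤ r ^ n := by
        apply pow_le_pow_of_le_one hr0.le hr1.le
        have := Nat.lt_two_pow_self (n := n)
        rw [hNdef]
        have : 2 ^ n ≤ 2 ^ (n+1) := Nat.pow_le_pow_right (by norm_num) (by omega)
        have := Nat.lt_two_pow_self (n := n)
        omega
      have hD : (0:ℝ) < (1 - r)⁻¹ := by
        have : 0 < 1 - r := by linarith
        positivity
      calc (∑' i : ℕ, (τ (i+N+1):ℝ)/q^(i+N+1)) ≤ r ^ (N+1) * (1 - r)⁻¹ := by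
            rw [← hB]; exact hA
        _ ≤ r ^ n * (1 - r)⁻¹ := by
            apply mul_le_mul_of_nonneg_right hC hD.le
    have : q⁻¹ - qKL⁻¹ ≤ r ^ n * (1 - r)⁻¹ := by
      rw [hdiffeq] at hdiff
      linarith
    linarith
  have htends : Tendsto (fun n => (Q (n+1))⁻¹) atTop (𝓝 qKL⁻¹) := by
    have hz : Tendsto (fun n : ℕ => qKL⁻¹ + r ^ n * (1 - r)⁻¹) atTop (𝓝 qKL⁻¹) := by
      have h1 : Tendsto (fun n : ℕ => r ^ n * (1 - r)⁻¹) atTop (𝓝 0) := by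
        simpa using (tendsto_pow_atTop_nhds_zero_of_lt_one hr0.le hr1).mul_const (1-r)⁻¹
      simpa using (tendsto_const_nhds (x := qKL⁻¹) (f := atTop)).add h1
    exact tendsto_of_tendsto_of_tendsto_of_le_of_le tendsto_const_nhds hz
      (fun n => (key n).1) (fun n => (key n).2)
  have hfin := htends.inv₀ (by positivity)
  simp only [inv_inv] at hfin
  exact hfin
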